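/- Memory is irrelevant for mv-ATL: Let L be a finite distributive lattice and M an mv-CGS over L. For formulas of mv-ATL (the fragment in which strategic and temporal operators occur only in the combinations ⟪A⟫Xφ, ⟪A⟫φ1Uφ2 and ⟪A⟫φ1Wφ2), the truth value at every state is the same whether the strategic operator ⟪A⟫ is interpreted over collective perfect-recall strategies or over collective memoryless strategies: [[φ]]^{IR}_{M,q} = [[φ]]^{Ir}_{M,q} for every mv-ATL formula φ and every state q. -/

import Mathlib

set_option linter.unusedSectionVars false
structure CGS (Agt St Act : Type*) where
  d : Agt → St → Set Act
  d_nonempty : ∀ a q, (d a q).Nonempty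
  t : St → (Agt → Act) → St

namespace CGS

variable {Agt St Act : Type*}

/-- An action profile `α` is available at state `q`. -/
def Avail (G : CGS Agt St Act) (q : St) (α : Agt → Act) : Prop :=
  ∀ a, α a ∈ G.d a q

/-- A perfect-recall strategy for agent `a`: a choice of an available action
for every nonempty finite history, represented as (proper prefix, last state). -/
structure PRStrategy (G : CGS Agt St Act) (a : Agt) where
  act : List St → St → Act
  avail : ∀ h q, act h q ∈ G.d a q

/-- A memoryless strategy for agent `a`. -/
structure MLStrategy (G : CGS Agt St Act) (a : Agt) where
  act : St → Act
  avail : ∀ q, act q ∈ G.d a q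

/-- A collective perfect-recall strategy for the coalition `A`. -/
def PRColl (G : CGS Agt St Act) (A : Set Agt) := (a : A) → PRStrategy G (a : Agt)

/-- A collective memoryless strategy for the coalition `A`. -/
def MLColl (G : CGS Agt St Act) (A : Set Agt) := (a : A) → MLStrategy G (a : Agt)

/-- The outcome set of a collective perfect-recall strategy `s` from state `q`. -/
def prOut (G : CGS Agt St Act) {A : Set Agt} (q : St) (s : PRColl G A) : Set (ℕ → St) :=
  { lam | lam 0 = q ∧ ∀ i, ∃ α, G.Avail (lam i) α ∧ G.t (lam i) α = lam (i + 1) ∧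
      ∀ a : A, α (a : Agt) = (s a).act (List.ofFn fun j : Fin i => lam j) (lam i) }

/-- The outcome set of a collective memoryless strategy `s` from state `q`. -/
def mlOut (G : CGS Agt St Act) {A : Set Agt} (q : St) (s : MLColl G A) : Set (ℕ → St) :=
  { lam | lam 0 = q ∧ ∀ i, ∃ α, G.Avail (lam i) α ∧ G.t (lam i) α = lam (i + 1) ∧
      ∀ a : A, α (a : Agt) = (s a).act (lam i) }

end CGS

namespace CGS
open Classical
variable {Agt St Act : Type*} (G : CGS Agt St Act) {A : Set Agt}

/-- Any partial profile for coalition `A` extends to an available full profile. -/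
theorem exists_avail_ext (q : St) (β : (a : A) → Act) (hβ : ∀ a : A, β a ∈ G.d a q) :
    ∃ α : Agt → Act, G.Avail q α ∧ ∀ a : A, α (a : Agt) = β a := by
  classical
  refine ⟨fun b => if hb : b ∈ A then β ⟨b, hb⟩ else (G.d_nonempty b q).choose, fun b => ?_, ?_⟩
  · by_cases hb : b ∈ A
    · simpa [hb] using hβ ⟨b, hb⟩
    · simpa [hb] using (G.d_nonempty b q).choose_spec
  · intro a; simp

/-- A memoryless collective strategy as a perfect-recall one. -/
def toPR (s : MLColl G A) : PRColl G A := fun a =>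
  { act := fun _ q => (s a).act q, avail := fun _ q => (s a).avail q }

theorem prOut_toPR (q : St) (s : MLColl G A) : G.prOut q (G.toPR s) = G.mlOut q s := rfl

/-- Shift a perfect-recall strategy past a first state `q`. -/
def shiftPR (q : St) (s : PRColl G A) : PRColl G A := fun a =>
  { act := fun h x => (s a).act (q :: h) x, avail := fun h x => (s a).avail (q :: h) x }

/-- Prepend a state to a path. -/
def consPath (q : St) (lam : ℕ → St) : ℕ → St := fun n => match n with
  | 0 => q
  | n + 1 => lam n

theorem cons_mem_prOut {q : St} {s : PRColl G A} {α : Agt → Act} {lam : ℕ → St}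
    (hα : G.Avail q α) (hagr : ∀ a : A, α (a : Agt) = (s a).act [] q)
    (ht : G.t q α = lam 0) (hlam : lam ∈ G.prOut (lam 0) (G.shiftPR q s)) :
    consPath q lam ∈ G.prOut q s := by
  refine ⟨rfl, fun i => ?_⟩
  match i with
  | 0 =>
    refine ⟨α, hα, ht, fun a => ?_⟩
    simpa [consPath] using hagr a
  | i + 1 =>
    obtain ⟨α', h1, h2, h3⟩ := hlam.2 i
    refine ⟨α', h1, h2, fun a => ?_⟩
    rw [h3 a]
    show (s a).act (q :: List.ofFn fun j : Fin i => lam j) (lam i) = _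
    congr 1
    rw [List.ofFn_succ]
    rfl

theorem shift_mem_mlOut {q : St} {s : MLColl G A} {lam : ℕ → St}
    (h : lam ∈ G.mlOut q s) : (fun n => lam (n + 1)) ∈ G.mlOut (lam 1) s :=
  ⟨rfl, fun i => h.2 (i + 1)⟩

/-- Build a path following a perfect-recall strategy, using a chooser for the
action profile at each history. -/
noncomputable def buildPair (step : List St → St → St) (q : St) : ℕ → List St × St :=
  fun n => Nat.rec (([] : List St), q) (fun _ p => (p.1 ++ [p.2], step p.1 p.2)) n

theorem buildPath_mem_prOut (s : PRColl G A) (q : St)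
    (ch : List St → St → (Agt → Act))
    (hch : ∀ h x, G.Avail x (ch h x) ∧ ∀ a : A, ch h x (a : Agt) = (s a).act h x) :
    (fun n => (buildPair (fun h x => G.t x (ch h x)) q n).2) ∈ G.prOut q s ∧
    (fun n => (buildPair (fun h x => G.t x (ch h x)) q n).2) 0 = q ∧
    ∀ n, (buildPair (fun h x => G.t x (ch h x)) q n).1 =
      List.ofFn (fun j : Fin n => (buildPair (fun h x => G.t x (ch h x)) q (j : ℕ)).2) := by
  set step : List St → St → St := fun h x => G.t x (ch h x) with hstep
  set lam : ℕ → St := fun n => (buildPair step q n).2 with hlam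
  have hhist : ∀ n, (buildPair step q n).1 = List.ofFn (fun j : Fin n => lam (j : ℕ)) := by
    intro n
    induction n with
    | zero => rfl
    | succ n ih =>
      show (buildPair step q n).1 ++ [(buildPair step q n).2] = _
      rw [ih, List.ofFn_succ']
      simp [List.concat_eq_append, hlam]
  refine ⟨⟨rfl, fun i => ?_⟩, rfl, hhist⟩
  refine ⟨ch (buildPair step q i).1 (lam i), ?_, ?_, ?_⟩
  · exact (hch _ _).1
  · rfl
  · intro a
    rw [(hch _ _).2 a, hhist i]

theorem prOut_nonempty (s : PRColl G A) (q : St) : (G.prOut q s).Nonempty := by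
  classical
  set ch : List St → St → (Agt → Act) := fun h x =>
    (exists_avail_ext G x (fun a : A => (s a).act h x) (fun a => (s a).avail h x)).choose
  have hch : ∀ h x, G.Avail x (ch h x) ∧ ∀ a : A, ch h x (a : Agt) = (s a).act h x :=
    fun h x => (exists_avail_ext G x (fun a : A => (s a).act h x) (fun a => (s a).avail h x)).choose_spec
  exact ⟨_, (buildPath_mem_prOut G s q ch hch).1⟩

end CGS

section Lattice
variable {L : Type*} [CompleteLattice L] [Fintype L]

theorem sSup_eq_finsetSup (S : Set L) : sSup S = (Set.toFinite S).toFinset.sup id := by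
  apply le_antisymm
  · exact sSup_le fun x hx => Finset.le_sup (f := id) ((Set.Finite.mem_toFinset _).2 hx)
  · exact Finset.sup_le fun x hx => le_sSup ((Set.Finite.mem_toFinset _).1 hx)

theorem supIrred_prime (hd : ∀ x y z : L, x ⊓ (y ⊔ z) = (x ⊓ y) ⊔ (x ⊓ z)) {l : L} (hl : SupIrred l) : SupPrime l := by
  refine ⟨hl.1, fun b c h => ?_⟩
  have h2 : (l ⊓ b) ⊔ (l ⊓ c) = l := by
    rw [← hd]; exact inf_eq_left.2 h
  rcases hl.2 h2 with h3 | h3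
  · exact Or.inl (inf_eq_left.1 h3)
  · exact Or.inr (inf_eq_left.1 h3)

theorem prime_le_sSup_iff {l : L} (hl : SupPrime l) (S : Set L) :
    l ≤ sSup S ↔ ∃ x ∈ S, l ≤ x := by
  rw [sSup_eq_finsetSup, SupPrime.le_finset_sup hl]
  simp [Set.Finite.mem_toFinset]

theorem prime_le_iSup_iff {l : L} (hl : SupPrime l) {ι : Sort*} (f : ι → L) :
    l ≤ ⨆ i, f i ↔ ∃ i, l ≤ f i := by
  rw [iSup, prime_le_sSup_iff hl]
  constructor
  · rintro ⟨x, ⟨i, rfl⟩, h⟩; exact ⟨i, h⟩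
  · rintro ⟨i, h⟩; exact ⟨f i, ⟨i, rfl⟩, h⟩

theorem eq_of_forall_supIrred_le_iff {x y : L}
    (h : ∀ l : L, SupIrred l → (l ≤ x ↔ l ≤ y)) : x = y := by
  obtain ⟨s, hs, hirr⟩ := exists_supIrred_decomposition x
  obtain ⟨t, ht, htirr⟩ := exists_supIrred_decomposition y
  apply le_antisymm
  · rw [← hs]
    exact Finset.sup_le fun b hb =>
      (h b (hirr hb)).1 (hs ▸ Finset.le_sup (f := id) hb)
  · rw [← ht]
    exact Finset.sup_le fun b hb =>
      (h b (htirr hb)).2 (ht ▸ Finset.le_sup (f := id) hb)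
end Lattice
section Fix
open Classical
namespace CGS
variable {Agt St Act : Type*} (G : CGS Agt St Act) {A : Set Agt} (P1 P2 : St → Prop)

/-- The coalition `A` can force the next state into `S` from `q`. -/
def Force (q : St) (S : Set St) : Prop :=
  ∃ β : (a : A) → Act, (∀ a : A, β a ∈ G.d a q) ∧
    ∀ α : Agt → Act, G.Avail q α → (∀ a : A, α (a : Agt) = β a) → G.t q α ∈ S

variable (A) in
/-- One-step operator whose lfp/gfp characterize `⟪A⟫ P1 U P2` / `⟪A⟫ P1 W P2`. -/
def Fop (S : Set St) : Set St := {q | P2 q ∨ (P1 q ∧ Force G (A := A) q S)}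

theorem Fop_mono {S T : Set St} (h : S ⊆ T) : Fop G A P1 P2 S ⊆ Fop G A P1 P2 T := by
  rintro q (hq | ⟨h1, β, hβ, hf⟩)
  · exact Or.inl hq
  · exact Or.inr ⟨h1, β, hβ, fun α ha hagr => h (hf α ha hagr)⟩

variable (A) in
def Wk (k : ℕ) : Set St := (Fop G A P1 P2)^[k] ∅

variable (A) in
def Wset : Set St := {q | ∃ k, q ∈ Wk G A P1 P2 k}

theorem Wk_succ (k : ℕ) : Wk G A P1 P2 (k + 1) = Fop G A P1 P2 (Wk G A P1 P2 k) :=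
  Function.iterate_succ_apply' _ _ _

theorem Wk_succ_mono (k : ℕ) : Wk G A P1 P2 k ⊆ Wk G A P1 P2 (k + 1) := by
  induction k with
  | zero => simp [Wk]
  | succ m ih => rw [Wk_succ, Wk_succ]; exact Fop_mono G P1 P2 ih

theorem Wk_mono {k l : ℕ} (h : k ≤ l) : Wk G A P1 P2 k ⊆ Wk G A P1 P2 l := by
  induction h with
  | refl => exact subset_rfl
  | step _ ih => exact ih.trans (Wk_succ_mono G P1 P2 _)

theorem Wset_prefixed [Fintype Agt] [Fintype Act] :
    Fop G A P1 P2 (Wset G A P1 P2) ⊆ Wset G A P1 P2 := by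
  classical
  rintro q (hq | ⟨h1, β, hβ, hf⟩)
  · exact ⟨1, Or.inl hq⟩
  · -- pick a uniform stage
    set k : (Agt → Act) → ℕ := fun α =>
      if h : (fun x => ∃ m, x ∈ Wk G A P1 P2 m) (G.t q α) then Nat.find h else 0 with hk
    set K : ℕ := Finset.univ.sup k with hK
    refine ⟨K + 1, ?_⟩
    rw [Wk_succ]
    refine Or.inr ⟨h1, β, hβ, fun α ha hagr => ?_⟩
    have hw : ∃ m, G.t q α ∈ Wk G A P1 P2 m := hf α ha hagr
    have : G.t q α ∈ Wk G A P1 P2 (k α) := by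
      simp only [hk]
      rw [dif_pos hw]
      exact Nat.find_spec hw
    exact Wk_mono G P1 P2 (Finset.le_sup (Finset.mem_univ α)) this

variable (A) in
def Zset : Set St := {q | ∃ S : Set St, S ⊆ Fop G A P1 P2 S ∧ q ∈ S}

theorem Zset_postfixed : Zset G A P1 P2 ⊆ Fop G A P1 P2 (Zset G A P1 P2) := by
  rintro q ⟨S, hS, hq⟩
  have h2 : S ⊆ Zset G A P1 P2 := fun x hx => ⟨S, hS, hx⟩
  exact Fop_mono G P1 P2 h2 (hS hq)

end CGS
end Fix
section Hard
namespace CGS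
variable {Agt St Act : Type*} (G : CGS Agt St Act) {A : Set Agt} (P1 P2 : St → Prop)

theorem P2_mem_Wset {x : St} (h : P2 x) : x ∈ Wset G A P1 P2 :=
  ⟨1, by rw [show (1:ℕ) = 0 + 1 from rfl, Wk_succ]; exact Or.inl h⟩

theorem ml_of_Wset :
    ∃ m : MLColl G A, ∀ q ∈ Wset G A P1 P2, ∀ lam ∈ G.mlOut q m,
      ∃ i, P2 (lam i) ∧ ∀ j < i, P1 (lam j) := by
  classical
  have key : ∀ x (h : x ∈ Wset G A P1 P2), ¬P2 x →
      ∃ β : (a : A) → Act, (∀ a : A, β a ∈ G.d a x) ∧ P1 x ∧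
        ∀ α : Agt → Act, G.Avail x α → (∀ a : A, α (a : Agt) = β a) →
          G.t x α ∈ Wk G A P1 P2 (Nat.find h - 1) := by
    intro x h h2
    have hsp : x ∈ Wk G A P1 P2 (Nat.find h) := Nat.find_spec h
    have hne : Nat.find h ≠ 0 := by
      intro h0
      rw [h0] at hsp
      exact hsp.elim
    have : x ∈ Fop G A P1 P2 (Wk G A P1 P2 (Nat.find h - 1)) := by
      have he : Nat.find h - 1 + 1 = Nat.find h := by omega
      rw [← Wk_succ, he]
      exact hsp
    rcases this with hx | ⟨h1, β, hβ, hf⟩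
    · exact absurd hx h2
    · exact ⟨β, hβ, h1, hf⟩
  refine ⟨fun a => ⟨fun x =>
      if h : x ∈ Wset G A P1 P2 ∧ ¬P2 x then Classical.choose (key x h.1 h.2) a
      else Classical.choose (G.d_nonempty a x), fun x => ?_⟩, ?_⟩
  · by_cases h : x ∈ Wset G A P1 P2 ∧ ¬P2 x
    · simp only [dif_pos h]
      exact (Classical.choose_spec (key x h.1 h.2)).1 a
    · simp only [dif_neg h]
      exact Classical.choose_spec (G.d_nonempty a x)
  · set m : MLColl G A := fun a => ⟨fun x =>
      if h : x ∈ Wset G A P1 P2 ∧ ¬P2 x then Classical.choose (key x h.1 h.2) a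
      else Classical.choose (G.d_nonempty a x), fun x => by
        by_cases h : x ∈ Wset G A P1 P2 ∧ ¬P2 x
        · simp only [dif_pos h]; exact (Classical.choose_spec (key x h.1 h.2)).1 a
        · simp only [dif_neg h]; exact Classical.choose_spec (G.d_nonempty a x)⟩ with hm
    have main : ∀ r q, q ∈ Wk G A P1 P2 r → ∀ lam ∈ G.mlOut q m,
        ∃ i, P2 (lam i) ∧ ∀ j < i, P1 (lam j) := by
      intro r
      induction r using Nat.strong_induction_on with
      | _ r ih =>
        intro q hq lam hlam
        by_cases h2 : P2 (lam 0)
        · exact ⟨0, h2, fun j hj => absurd hj (Nat.not_lt_zero j)⟩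
        · have hw : q ∈ Wset G A P1 P2 := ⟨r, hq⟩
          have hq0 : lam 0 = q := hlam.1
          have hw0 : lam 0 ∈ Wset G A P1 P2 := hq0 ▸ hw
          have hcond : lam 0 ∈ Wset G A P1 P2 ∧ ¬P2 (lam 0) := ⟨hw0, h2⟩
          obtain ⟨α, hav, htr, hagr⟩ := hlam.2 0
          have hag2 : ∀ a : A, α (a : Agt) = Classical.choose (key (lam 0) hcond.1 hcond.2) a := by
            intro a
            rw [hagr a]
            show dite _ _ _ = _
            rw [dif_pos hcond]
          have hspec := Classical.choose_spec (key (lam 0) hcond.1 hcond.2)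
          have h1 : lam 1 ∈ Wk G A P1 P2 (Nat.find hcond.1 - 1) := by
            rw [← htr]
            exact hspec.2.2 α hav hag2
          have hlt : Nat.find hcond.1 - 1 < r := by
            have hle : Nat.find hcond.1 ≤ r := Nat.find_le (hq0 ▸ hq)
            have hne : Nat.find hcond.1 ≠ 0 := by
              intro h0
              have := Nat.find_spec hcond.1
              rw [h0] at this
              exact this.elim
            omega
          obtain ⟨i, hi2, hi1⟩ := ih _ hlt (lam 1) h1 (fun n => lam (n + 1))
            (G.shift_mem_mlOut hlam)
          refine ⟨i + 1, hi2, fun j hj => ?_⟩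
          match j with
          | 0 => exact hspec.2.1
          | j + 1 => exact hi1 j (by omega)
    rintro q ⟨r, hr⟩ lam hlam
    exact main r q hr lam hlam

theorem mem_Wset_of_pr [Fintype Agt] [Fintype Act] (q : St) (s : PRColl G A)
    (hs : ∀ lam ∈ G.prOut q s, ∃ i, P2 (lam i) ∧ ∀ j < i, P1 (lam j)) :
    q ∈ Wset G A P1 P2 := by
  classical
  by_contra hq
  set ch : List St → St → (Agt → Act) := fun h x =>
    if hx : ∃ α, G.Avail x α ∧ (∀ a : A, α (a : Agt) = (s a).act h x) ∧
        G.t x α ∉ Wset G A P1 P2 then hx.choose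
    else (exists_avail_ext G x (fun a : A => (s a).act h x) (fun a => (s a).avail h x)).choose
    with hchdef
  have hch : ∀ h x, G.Avail x (ch h x) ∧ ∀ a : A, ch h x (a : Agt) = (s a).act h x := by
    intro h x
    by_cases hx : ∃ α, G.Avail x α ∧ (∀ a : A, α (a : Agt) = (s a).act h x) ∧
        G.t x α ∉ Wset G A P1 P2
    · simp only [hchdef, dif_pos hx]
      exact ⟨hx.choose_spec.1, hx.choose_spec.2.1⟩
    · simp only [hchdef, dif_neg hx]
      exact (exists_avail_ext G x (fun a : A => (s a).act h x)
        (fun a => (s a).avail h x)).choose_spec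
  obtain ⟨hmem, h0, hhist⟩ := G.buildPath_mem_prOut s q ch hch
  set lam : ℕ → St := fun n => (buildPair (fun h x => G.t x (ch h x)) q n).2 with hlamdef
  have hstep : ∀ n, lam (n + 1) =
      G.t (lam n) (ch (List.ofFn fun j : Fin n => lam (j : ℕ)) (lam n)) := by
    intro n
    rw [← hhist n]
    rfl
  have inv : ∀ i, lam i ∉ Wset G A P1 P2 ∨ ∃ j < i, ¬P1 (lam j) := by
    intro i
    induction i with
    | zero => exact Or.inl (h0 ▸ hq)
    | succ i ihi =>
      rcases ihi with hi | ⟨j, hj, hP⟩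
      · by_cases hP1 : P1 (lam i)
        · -- can escape Wset
          have hnF : lam i ∉ Fop G A P1 P2 (Wset G A P1 P2) :=
            fun hc => hi (Wset_prefixed G P1 P2 hc)
          have hxex : ∃ α, G.Avail (lam i) α ∧
              (∀ a : A, α (a : Agt) =
                (s a).act (List.ofFn fun j : Fin i => lam (j : ℕ)) (lam i)) ∧
              G.t (lam i) α ∉ Wset G A P1 P2 := by
            by_contra hno
            push_neg at hno
            refine hnF (Or.inr ⟨hP1, fun a : A =>
              (s a).act (List.ofFn fun j : Fin i => lam (j : ℕ)) (lam i),
              fun a => (s a).avail (List.ofFn fun j : Fin i => lam (j : ℕ)) (lam i),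
              fun α ha hagr => ?_⟩)
            by_contra hc
            exact hc (hno α ha hagr)
          have hce : ch (List.ofFn fun j : Fin i => lam (j : ℕ)) (lam i) = hxex.choose := by
            rw [hchdef]
            exact dif_pos hxex
          refine Or.inl ?_
          rw [hstep i, hce]
          exact hxex.choose_spec.2.2
        · exact Or.inr ⟨i, Nat.lt_succ_self i, hP1⟩
      · exact Or.inr ⟨j, hj.trans (Nat.lt_succ_self i), hP⟩
  obtain ⟨i, hi2, hi1⟩ := hs lam hmem
  rcases inv i with hi | ⟨j, hj, hP⟩
  · exact hi (P2_mem_Wset G P1 P2 hi2)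
  · exact hP (hi1 j hj)

end CGS
end Hard
section HardW
namespace CGS
variable {Agt St Act : Type*} (G : CGS Agt St Act) {A : Set Agt} (P1 P2 : St → Prop)

/-- The weak-until path property. -/
def WProp (lam : ℕ → St) : Prop :=
  (∀ i, P1 (lam i)) ∨ ∃ i, P2 (lam i) ∧ ∀ j < i, P1 (lam j)

theorem mem_Zset_of_pr (q : St) (s : PRColl G A)
    (hs : ∀ lam ∈ G.prOut q s, WProp P1 P2 lam) : q ∈ Zset G A P1 P2 := by
  classical
  set E : Set St := {x | ∃ σ : PRColl G A, ∀ lam ∈ G.prOut x σ, WProp P1 P2 lam} with hE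
  refine ⟨E, ?_, ⟨s, hs⟩⟩
  rintro x ⟨σ, hσ⟩
  by_cases h2 : P2 x
  · exact Or.inl h2
  · -- P1 x holds, via any outcome
    obtain ⟨lam₀, hlam₀⟩ := G.prOut_nonempty σ x
    have hx0 : lam₀ 0 = x := hlam₀.1
    have hP1 : P1 x := by
      rcases hσ lam₀ hlam₀ with h | ⟨i, hi2, hi1⟩
      · exact hx0 ▸ h 0
      · match i with
        | 0 => exact absurd (hx0 ▸ hi2) h2
        | i + 1 => exact hx0 ▸ hi1 0 (Nat.succ_pos i)
    refine Or.inr ⟨hP1, fun a : A => (σ a).act [] x, fun a => (σ a).avail [] x,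
      fun α ha hagr => ?_⟩
    refine ⟨shiftPR G x σ, fun lam hlam => ?_⟩
    have hl0 : lam 0 = G.t x α := hlam.1
    have hcons : consPath x lam ∈ G.prOut x σ :=
      cons_mem_prOut G ha hagr hl0.symm (hl0 ▸ hlam)
    rcases hσ _ hcons with h | ⟨i, hi2, hi1⟩
    · exact Or.inl fun i => h (i + 1)
    · match i with
      | 0 => exact absurd hi2 h2
      | i + 1 => exact Or.inr ⟨i, hi2, fun j hj => hi1 (j + 1) (by omega)⟩

theorem ml_of_Zset :
    ∃ m : MLColl G A, ∀ q ∈ Zset G A P1 P2, ∀ lam ∈ G.mlOut q m, WProp P1 P2 lam := by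
  classical
  have key : ∀ x, x ∈ Zset G A P1 P2 → ¬P2 x →
      ∃ β : (a : A) → Act, (∀ a : A, β a ∈ G.d a x) ∧ P1 x ∧
        ∀ α : Agt → Act, G.Avail x α → (∀ a : A, α (a : Agt) = β a) →
          G.t x α ∈ Zset G A P1 P2 := by
    intro x hx h2
    rcases Zset_postfixed G P1 P2 hx with h | ⟨h1, β, hβ, hf⟩
    · exact absurd h h2
    · exact ⟨β, hβ, h1, hf⟩
  refine ⟨fun a => ⟨fun x =>
      if h : x ∈ Zset G A P1 P2 ∧ ¬P2 x then Classical.choose (key x h.1 h.2) a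
      else Classical.choose (G.d_nonempty a x), fun x => ?_⟩, ?_⟩
  · by_cases h : x ∈ Zset G A P1 P2 ∧ ¬P2 x
    · simp only [dif_pos h]
      exact (Classical.choose_spec (key x h.1 h.2)).1 a
    · simp only [dif_neg h]
      exact Classical.choose_spec (G.d_nonempty a x)
  · intro q hq lam hlam
    have hq0 : lam 0 = q := hlam.1
    have J : ∀ i, (∀ k ≤ i, ¬P2 (lam k)) → lam i ∈ Zset G A P1 P2 := by
      intro i
      induction i with
      | zero => exact fun _ => hq0 ▸ hq
      | succ i ihi =>
        intro hk
        have hi : lam i ∈ Zset G A P1 P2 := ihi fun k hki => hk k (hki.trans (Nat.le_succ i))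
        have hcond : lam i ∈ Zset G A P1 P2 ∧ ¬P2 (lam i) := ⟨hi, hk i (Nat.le_succ i)⟩
        obtain ⟨α, hav, htr, hagr⟩ := hlam.2 i
        have hspec := Classical.choose_spec (key (lam i) hcond.1 hcond.2)
        have hag2 : ∀ a : A, α (a : Agt) = Classical.choose (key (lam i) hcond.1 hcond.2) a := by
          intro a
          rw [hagr a]
          show dite _ _ _ = _
          rw [dif_pos hcond]
        rw [← htr]
        exact hspec.2.2 α hav hag2
    have hPZ : ∀ i, (∀ k ≤ i, ¬P2 (lam k)) → P1 (lam i) := by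
      intro i hk
      rcases Zset_postfixed G P1 P2 (J i hk) with h | ⟨h1, _⟩
      · exact absurd h (hk i le_rfl)
      · exact h1
    by_cases hex : ∃ i, P2 (lam i)
    · refine Or.inr ⟨Nat.find hex, Nat.find_spec hex, fun j hj => ?_⟩
      exact hPZ j fun k hkj => Nat.find_min hex (lt_of_le_of_lt hkj hj)
    · push_neg at hex
      exact Or.inl fun i => hPZ i fun k _ => hex k

theorem prX_to_ml (q : St) (s : PRColl G A) (P : St → Prop)
    (hs : ∀ lam ∈ G.prOut q s, P (lam 1)) :
    ∃ m : MLColl G A, ∀ lam ∈ G.mlOut q m, P (lam 1) := by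
  classical
  refine ⟨fun a => ⟨fun x => (s a).act [] x, fun x => (s a).avail [] x⟩,
    fun lam hlam => ?_⟩
  have hq0 : lam 0 = q := hlam.1
  obtain ⟨α, hav, htr, hagr⟩ := hlam.2 0
  rw [hq0] at hav htr hagr
  obtain ⟨lam', hlam'⟩ := G.prOut_nonempty (shiftPR G q s) (G.t q α)
  have hl0 : lam' 0 = G.t q α := hlam'.1
  have hcons : consPath q lam' ∈ G.prOut q s :=
    cons_mem_prOut G hav (fun a => by rw [hagr a]) hl0.symm (hl0 ▸ hlam')
  have := hs _ hcons
  show P (lam 1)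
  have h1 : consPath q lam' 1 = lam 1 := by
    show lam' 0 = lam 1
    rw [hl0, htr]
  rwa [h1] at this

end CGS
end HardW
section Coop
namespace CGS
variable {Agt St Act : Type*} (G : CGS Agt St Act) {A : Set Agt} (P1 P2 : St → Prop)

theorem coopX_iff (q : St) (P : St → Prop) :
    (∃ s : PRColl G A, ∀ lam ∈ G.prOut q s, P (lam 1)) ↔
    (∃ m : MLColl G A, ∀ lam ∈ G.mlOut q m, P (lam 1)) := by
  constructor
  · rintro ⟨s, hs⟩
    exact prX_to_ml G q s P hs
  · rintro ⟨m, hm⟩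
    exact ⟨toPR G m, by rw [prOut_toPR]; exact hm⟩

theorem coopU_iff [Fintype Agt] [Fintype Act] (q : St) :
    (∃ s : PRColl G A, ∀ lam ∈ G.prOut q s, ∃ i, P2 (lam i) ∧ ∀ j < i, P1 (lam j)) ↔
    (∃ m : MLColl G A, ∀ lam ∈ G.mlOut q m, ∃ i, P2 (lam i) ∧ ∀ j < i, P1 (lam j)) := by
  constructor
  · rintro ⟨s, hs⟩
    have hq : q ∈ Wset G A P1 P2 := mem_Wset_of_pr G P1 P2 q s hs
    obtain ⟨m, hm⟩ := ml_of_Wset G P1 P2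
    exact ⟨m, hm q hq⟩
  · rintro ⟨m, hm⟩
    exact ⟨toPR G m, by rw [prOut_toPR]; exact hm⟩

theorem coopW_iff (q : St) :
    (∃ s : PRColl G A, ∀ lam ∈ G.prOut q s,
      (∀ i, P1 (lam i)) ∨ ∃ i, P2 (lam i) ∧ ∀ j < i, P1 (lam j)) ↔
    (∃ m : MLColl G A, ∀ lam ∈ G.mlOut q m,
      (∀ i, P1 (lam i)) ∨ ∃ i, P2 (lam i) ∧ ∀ j < i, P1 (lam j)) := by
  constructor
  · rintro ⟨s, hs⟩
    have hq : q ∈ Zset G A P1 P2 := mem_Zset_of_pr G P1 P2 q s hs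
    obtain ⟨m, hm⟩ := ml_of_Zset G P1 P2
    exact ⟨m, hm q hq⟩
  · rintro ⟨m, hm⟩
    exact ⟨toPR G m, by rw [prOut_toPR]; exact hm⟩

end CGS
end Coop
/-- Formulas of mv-ATL ("vanilla" ATL): strategic and temporal operators occur
only in the combinations `⟪A⟫X`, `⟪A⟫U` and `⟪A⟫W`. -/
inductive ATLForm (AP C Agt : Type) : Type
  | const : C → ATLForm AP C Agt
  | atom  : AP → ATLForm AP C Agt
  | and   : ATLForm AP C Agt → ATLForm AP C Agt → ATLForm AP C Agt
  | or    : ATLForm AP C Agt → ATLForm AP C Agt → ATLForm AP C Agt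
  | coopX : Set Agt → ATLForm AP C Agt → ATLForm AP C Agt
  | coopU : Set Agt → ATLForm AP C Agt → ATLForm AP C Agt → ATLForm AP C Agt
  | coopW : Set Agt → ATLForm AP C Agt → ATLForm AP C Agt → ATLForm AP C Agt

variable {Agt St Act AP C : Type} {L : Type*} [CompleteLattice L]

/-- Multi-valued semantics of mv-ATL under perfect-recall (IR) strategies. -/
noncomputable def valIR (G : CGS Agt St Act) (σ : C → L) (V : AP → St → L) :
    ATLForm AP C Agt → St → L
  | .const c, _ => σ c
  | .atom p, q => V p q
  | .and φ ψ, q => valIR G σ V φ q ⊓ valIR G σ V ψ q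
  | .or φ ψ, q => valIR G σ V φ q ⊔ valIR G σ V ψ q
  | .coopX A φ, q => ⨆ s : CGS.PRColl G A, ⨅ lam ∈ CGS.prOut G q s, valIR G σ V φ (lam 1)
  | .coopU A φ ψ, q => ⨆ s : CGS.PRColl G A, ⨅ lam ∈ CGS.prOut G q s,
      ⨆ i : ℕ, (valIR G σ V ψ (lam i) ⊓ ⨅ j : Fin i, valIR G σ V φ (lam (j : ℕ)))
  | .coopW A φ ψ, q => ⨆ s : CGS.PRColl G A, ⨅ lam ∈ CGS.prOut G q s,
      ((⨅ i : ℕ, valIR G σ V φ (lam i)) ⊔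
        ⨆ i : ℕ, (valIR G σ V ψ (lam i) ⊓ ⨅ j : Fin i, valIR G σ V φ (lam (j : ℕ))))

/-- Multi-valued semantics of mv-ATL under memoryless (Ir) strategies. -/
noncomputable def valIr (G : CGS Agt St Act) (σ : C → L) (V : AP → St → L) :
    ATLForm AP C Agt → St → L
  | .const c, _ => σ c
  | .atom p, q => V p q
  | .and φ ψ, q => valIr G σ V φ q ⊓ valIr G σ V ψ q
  | .or φ ψ, q => valIr G σ V φ q ⊔ valIr G σ V ψ q
  | .coopX A φ, q => ⨆ s : CGS.MLColl G A, ⨅ lam ∈ CGS.mlOut G q s, valIr G σ V φ (lam 1)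
  | .coopU A φ ψ, q => ⨆ s : CGS.MLColl G A, ⨅ lam ∈ CGS.mlOut G q s,
      ⨆ i : ℕ, (valIr G σ V ψ (lam i) ⊓ ⨅ j : Fin i, valIr G σ V φ (lam (j : ℕ)))
  | .coopW A φ ψ, q => ⨆ s : CGS.MLColl G A, ⨅ lam ∈ CGS.mlOut G q s,
      ((⨅ i : ℕ, valIr G σ V φ (lam i)) ⊔
        ⨆ i : ℕ, (valIr G σ V ψ (lam i) ⊓ ⨅ j : Fin i, valIr G σ V φ (lam (j : ℕ))))

section Main
variable {Agt St Act AP C : Type}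

theorem valProp_IR_iff_Ir [Fintype Agt] [Fintype Act]
    (G : CGS Agt St Act) (σ : C → Prop) (V : AP → St → Prop) :
    ∀ (φ : ATLForm AP C Agt) (q : St), valIR G σ V φ q ↔ valIr G σ V φ q := by
  intro φ
  induction φ with
  | const c => exact fun q => Iff.rfl
  | atom p => exact fun q => Iff.rfl
  | and φ ψ ih1 ih2 =>
    intro q
    simp only [valIR, valIr, inf_Prop_eq]
    exact and_congr (ih1 q) (ih2 q)
  | or φ ψ ih1 ih2 =>
    intro q
    simp only [valIR, valIr, sup_Prop_eq]
    exact or_congr (ih1 q) (ih2 q)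
  | coopX A φ ih =>
    intro q
    simp only [valIR, valIr, iSup_Prop_eq, iInf_Prop_eq, ih]
    exact CGS.coopX_iff G q (fun x => valIr G σ V φ x)
  | coopU A φ ψ ih1 ih2 =>
    intro q
    simp only [valIR, valIr, iSup_Prop_eq, iInf_Prop_eq, inf_Prop_eq, ih1, ih2, Fin.forall_iff]
    exact CGS.coopU_iff G (fun x => valIr G σ V φ x) (fun x => valIr G σ V ψ x) q
  | coopW A φ ψ ih1 ih2 =>
    intro q
    simp only [valIR, valIr, iSup_Prop_eq, iInf_Prop_eq, inf_Prop_eq, sup_Prop_eq,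
      ih1, ih2, Fin.forall_iff]
    exact CGS.coopW_iff G (fun x => valIr G σ V φ x) (fun x => valIr G σ V ψ x) q

theorem le_valIR_iff {L : Type*} [CompleteLattice L] [Fintype L] {l : L} (hl : SupPrime l)
    (G : CGS Agt St Act) (σ : C → L) (V : AP → St → L) :
    ∀ (φ : ATLForm AP C Agt) (q : St),
      (l ≤ valIR G σ V φ q ↔
        valIR (L := Prop) G (fun c => l ≤ σ c) (fun p x => l ≤ V p x) φ q) := by
  intro φ
  induction φ with
  | const c => exact fun q => Iff.rfl
  | atom p => exact fun q => Iff.rfl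
  | and φ ψ ih1 ih2 =>
    intro q
    simp only [valIR, le_inf_iff, inf_Prop_eq]
    exact and_congr (ih1 q) (ih2 q)
  | or φ ψ ih1 ih2 =>
    intro q
    simp only [valIR, hl.le_sup, sup_Prop_eq]
    exact or_congr (ih1 q) (ih2 q)
  | coopX A φ ih =>
    intro q
    simp only [valIR, prime_le_iSup_iff hl, le_iInf_iff, ih, iSup_Prop_eq, iInf_Prop_eq]
  | coopU A φ ψ ih1 ih2 =>
    intro q
    simp only [valIR, prime_le_iSup_iff hl, le_iInf_iff, le_inf_iff, ih1, ih2,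
      iSup_Prop_eq, iInf_Prop_eq, inf_Prop_eq]
  | coopW A φ ψ ih1 ih2 =>
    intro q
    simp only [valIR, prime_le_iSup_iff hl, le_iInf_iff, le_inf_iff, hl.le_sup, ih1, ih2,
      iSup_Prop_eq, iInf_Prop_eq, inf_Prop_eq, sup_Prop_eq]

theorem le_valIr_iff {L : Type*} [CompleteLattice L] [Fintype L] {l : L} (hl : SupPrime l)
    (G : CGS Agt St Act) (σ : C → L) (V : AP → St → L) :
    ∀ (φ : ATLForm AP C Agt) (q : St),
      (l ≤ valIr G σ V φ q ↔
        valIr (L := Prop) G (fun c => l ≤ σ c) (fun p x => l ≤ V p x) φ q) := by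
  intro φ
  induction φ with
  | const c => exact fun q => Iff.rfl
  | atom p => exact fun q => Iff.rfl
  | and φ ψ ih1 ih2 =>
    intro q
    simp only [valIr, le_inf_iff, inf_Prop_eq]
    exact and_congr (ih1 q) (ih2 q)
  | or φ ψ ih1 ih2 =>
    intro q
    simp only [valIr, hl.le_sup, sup_Prop_eq]
    exact or_congr (ih1 q) (ih2 q)
  | coopX A φ ih =>
    intro q
    simp only [valIr, prime_le_iSup_iff hl, le_iInf_iff, ih, iSup_Prop_eq, iInf_Prop_eq]
  | coopU A φ ψ ih1 ih2 =>
    intro q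
    simp only [valIr, prime_le_iSup_iff hl, le_iInf_iff, le_inf_iff, ih1, ih2,
      iSup_Prop_eq, iInf_Prop_eq, inf_Prop_eq]
  | coopW A φ ψ ih1 ih2 =>
    intro q
    simp only [valIr, prime_le_iSup_iff hl, le_iInf_iff, le_inf_iff, hl.le_sup, ih1, ih2,
      iSup_Prop_eq, iInf_Prop_eq, inf_Prop_eq, sup_Prop_eq]

end Main

/-- Memory is irrelevant for mv-ATL over a finite distributive lattice: the
perfect-recall and memoryless semantics assign the same truth value to every
mv-ATL formula at every state. -/
theorem stmt_19 {L : Type*} [CompleteLattice L] [Fintype L]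
    (hdistrib : ∀ x y z : L, x ⊓ (y ⊔ z) = (x ⊓ y) ⊔ (x ⊓ z))
    {Agt St Act AP C : Type} [Fintype Agt] [Fintype St] [Fintype Act]
    [Nonempty Agt] [Nonempty St] [Nonempty Act]
    (G : CGS Agt St Act) (σ : C → L) (V : AP → St → L)
    (φ : ATLForm AP C Agt) (q : St) :
    valIR G σ V φ q = valIr G σ V φ q := by
  apply eq_of_forall_supIrred_le_iff
  intro l hl
  have hp : SupPrime l := supIrred_prime hdistrib hl
  rw [le_valIR_iff hp G σ V φ q, le_valIr_iff hp G σ V φ q]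
  exact valProp_IR_iff_Ir G _ _ φ q
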